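/- Let G be a group and a ∈ Z₂(G) of finite order. If the center Z(G) has only finitely many elements of each given finite order, then the commutator subgroup image {[h,a] : h ∈ G} is finite, and hence the centralizer C_G(a) has finite index in G. -/

import Mathlib

/-- If `a ∈ Z₂(G)` has finite order and the center of `G` has only finitely many
elements of each given finite order, then `{[h,a] : h ∈ G}` is finite and the
centralizer `C_G(a)` has finite index in `G`. -/
theorem stmt_2 {G : Type*} [Group G] (a : G) (ha : a ∈ upperCentralSeries G 2)
    (hfin : IsOfFinOrder a)
    (hZ : ∀ n : ℕ, 0 < n → {z : G | z ∈ Subgroup.center G ∧ z ^ n = 1}.Finite) :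
    (Set.range fun h : G => h⁻¹ * a⁻¹ * h * a).Finite ∧
    (Subgroup.centralizer {a}).FiniteIndex := by
  obtain ⟨n, hn, han⟩ := isOfFinOrder_iff_pow_eq_one.mp hfin
  have ha' : ∀ y : G, a * y * a⁻¹ * y⁻¹ ∈ Subgroup.center G := by
    intro y
    have := (mem_upperCentralSeries_succ_iff (n := 1)).mp ha y
    rwa [upperCentralSeries_one] at this
  have key : ∀ h : G, (h⁻¹ * a⁻¹ * h * a) ∈ Subgroup.center G ∧
      (h⁻¹ * a⁻¹ * h * a) ^ n = 1 := by
    intro h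
    have hc : a * h⁻¹ * a⁻¹ * h⁻¹⁻¹ ∈ Subgroup.center G := ha' h⁻¹
    have hca : (a * h⁻¹ * a⁻¹ * h⁻¹⁻¹) * a = a * (a * h⁻¹ * a⁻¹ * h⁻¹⁻¹) :=
      (Subgroup.mem_center_iff.mp hc a).symm
    have hw : h⁻¹ * a⁻¹ * h * a = a * h⁻¹ * a⁻¹ * h⁻¹⁻¹ := by
      have : h⁻¹ * a⁻¹ * h * a = a⁻¹ * ((a * h⁻¹ * a⁻¹ * h⁻¹⁻¹) * a) := by group
      rw [this, hca]; group
    constructor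
    · rw [hw]; exact hc
    · have hcomm : Commute a ((h⁻¹ * a⁻¹ * h * a)⁻¹) := by
        refine (Commute.inv_right ?_)
        rw [hw]
        exact (Subgroup.mem_center_iff.mp hc a)
      have h1 : (a * (h⁻¹ * a⁻¹ * h * a)⁻¹) ^ n = 1 := by
        have he : a * (h⁻¹ * a⁻¹ * h * a)⁻¹ = h⁻¹ * a * h := by group
        rw [he]
        have he2 : h⁻¹ * a * h = h⁻¹ * a * h⁻¹⁻¹ := by group
        rw [he2, conj_pow, han]; group
      rw [hcomm.mul_pow, han, one_mul, inv_pow, inv_eq_one] at h1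
      exact h1
  have hS := hZ n hn
  have hrange : (Set.range fun h : G => h⁻¹ * a⁻¹ * h * a) ⊆
      {z : G | z ∈ Subgroup.center G ∧ z ^ n = 1} := by
    rintro _ ⟨h, rfl⟩; exact key h
  refine ⟨hS.subset hrange, ?_⟩
  -- finite index
  have hSfin : Finite {z : G | z ∈ Subgroup.center G ∧ z ^ n = 1} := hS
  let f : G ⧸ Subgroup.centralizer {a} → {z : G | z ∈ Subgroup.center G ∧ z ^ n = 1} :=
    Quotient.lift (fun h : G => ⟨h * a⁻¹ * h⁻¹ * a, by
        have := key h⁻¹; rwa [inv_inv] at this⟩)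
      (by
        intro h k hk
        have hk' : h⁻¹ * k ∈ Subgroup.centralizer {a} :=
          (QuotientGroup.leftRel_apply).mp hk
        have hcomm : (h⁻¹ * k) * a = a * (h⁻¹ * k) :=
          Subgroup.mem_centralizer_singleton_iff.mp hk'
        have hcomm' : (h⁻¹ * k) * a⁻¹ = a⁻¹ * (h⁻¹ * k) :=
          ((Commute.inv_right (hcomm))).symm ▸ rfl
        have : h * a⁻¹ * h⁻¹ = k * a⁻¹ * k⁻¹ := by
          have c : Commute (h⁻¹ * k) a⁻¹ := Commute.inv_right hcomm
          have := c.eq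
          calc h * a⁻¹ * h⁻¹ = h * ((h⁻¹ * k) * a⁻¹ * (h⁻¹ * k)⁻¹) * h⁻¹ * 1 := by
                rw [c.eq]; group
            _ = k * a⁻¹ * k⁻¹ := by group
        simp only [Subtype.mk.injEq]
        rw [this])
  have hfinj : Function.Injective f := by
    intro x y
    induction x using Quotient.inductionOn with | h h =>
    induction y using Quotient.inductionOn with | h k =>
    intro hxy
    have heq : h * a⁻¹ * h⁻¹ * a = k * a⁻¹ * k⁻¹ * a := congrArg Subtype.val hxy
    have heq' : h * a⁻¹ * h⁻¹ = k * a⁻¹ * k⁻¹ := by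
      have := mul_right_cancel heq; exact this
    have hc : (h⁻¹ * k) * a⁻¹ = a⁻¹ * (h⁻¹ * k) := by
      have : a⁻¹ * (h⁻¹ * k) = h⁻¹ * (h * a⁻¹ * h⁻¹) * k := by group
      rw [this, heq']; group
    have hmem : h⁻¹ * k ∈ Subgroup.centralizer {a} := by
      rw [Subgroup.mem_centralizer_singleton_iff]
      have := Commute.inv_right (a := h⁻¹ * k) (b := a⁻¹) hc
      simpa using this.eq
    exact Quotient.sound ((QuotientGroup.leftRel_apply).mpr hmem)
  have : Finite (G ⧸ Subgroup.centralizer {a}) := Finite.of_injective f hfinj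
  exact Subgroup.finiteIndex_of_finite_quotient
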